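/- Let (Ω, F, P) be a probability space, D ≥ 1 an integer, ψ₀ ∈ ℝ^D with at least one nonzero coordinate, and Σ₀ a positive semidefinite D×D matrix with strictly positive diagonal entries σ²_{ψ,0,d}. Let ψ_n : Ω → ℝ^D be random vectors with √n(ψ_n − ψ₀) converging in distribution to N(0, Σ₀); let σ²_n : Ω → (0, ∞)^D be random vectors with max_d |σ²_{n,d} − σ²_{ψ,0,d}| → 0 in probability; and let λ_n* : Ω → [0, ∞) be random variables with Crit(λ_n*, ψ_n, σ²_n, n) ≤ inf_{λ ≥ 0} Crit(λ, ψ_n, σ²_n, n) + ε_n, where ε_n → 0 in probability. Then λ_n* → 0 in probability. -/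

import Mathlib

open MeasureTheory ProbabilityTheory Filter Finset
open scoped Topology

/-- The soft-thresholding operator `S_λ : ℝ → ℝ`:
`S_λ(x) = x + λ` if `x < −λ`, `S_λ(x) = 0` if `|x| ≤ λ`, and `S_λ(x) = x − λ` if `x > λ`. -/
noncomputable def softThreshold (lam x : ℝ) : ℝ :=
  if x < -lam then x + lam else if x ≤ lam then 0 else x - lam

/-- `μ_λ(m, s², n)`: the mean of `S_λ(Z)` where `Z ~ N(m, s²/n)`. -/
noncomputable def softThresholdMean (lam m s2 : ℝ) (n : ℕ) : ℝ :=
  ∫ z, softThreshold lam z ∂(gaussianReal m (Real.toNNReal (s2 / n)))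

/-- `σ²_λ(m, s², n)`: the variance of `S_λ(Z)` where `Z ~ N(m, s²/n)`. -/
noncomputable def softThresholdVar (lam m s2 : ℝ) (n : ℕ) : ℝ :=
  (∫ z, softThreshold lam z ^ 2 ∂(gaussianReal m (Real.toNNReal (s2 / n)))) -
    softThresholdMean lam m s2 n ^ 2

/-- The L1 tuning criterion
`Crit(λ, ψ, s², n) = Σ_d [(μ_λ(ψ_d, s²_d, n) − ψ_d)² + σ²_λ(ψ_d, s²_d, n)]`. -/
noncomputable def l1Crit {D : ℕ} (lam : ℝ) (ψ s2 : Fin D → ℝ) (n : ℕ) : ℝ :=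
  ∑ d, ((softThresholdMean lam (ψ d) (s2 d) n - ψ d) ^ 2 + softThresholdVar lam (ψ d) (s2 d) n)

/-- The centered multivariate Gaussian measure `N(0, Σ)` on `ℝ^D` with positive semidefinite
covariance matrix `Σ`, realized as the pushforward of a product of `D` independent standard
Gaussians under multiplication by the positive semidefinite square root of `Σ`. -/
noncomputable def multivariateGaussian {D : ℕ} {S : Matrix (Fin D) (Fin D) ℝ}
    (hS : S.PosSemidef) : Measure (Fin D → ℝ) :=
  Measure.map (fun x => ((hS.1.eigenvectorUnitary : Matrix (Fin D) (Fin D) ℝ) *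
      Matrix.diagonal (Real.sqrt ∘ hS.1.eigenvalues) *
      (star hS.1.eigenvectorUnitary : Matrix (Fin D) (Fin D) ℝ)).mulVec x) (Measure.pi fun _ : Fin D => gaussianReal 0 1)

/-- Convergence in distribution: weak convergence of the pushforward laws. -/
def TendstoInDistribution {Ω E : Type*} [MeasurableSpace Ω] [MeasurableSpace E]
    [TopologicalSpace E] (P : Measure Ω) (X : ℕ → Ω → E) (ν : Measure E) : Prop :=
  ∀ f : BoundedContinuousFunction E ℝ,
    Tendsto (fun n => ∫ ω, f (X n ω) ∂P) atTop (𝓝 (∫ x, f x ∂ν))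

/-- Convergence in probability to a constant: `P(‖X_n − c‖ > ε) → 0` for every `ε > 0`.
(For `E = Fin D → ℝ` the norm is the sup-norm `max_d`.) -/
def TendstoInProbability {Ω E : Type*} [MeasurableSpace Ω] [NormedAddCommGroup E]
    (P : Measure Ω) (X : ℕ → Ω → E) (c : E) : Prop :=
  ∀ ε : ℝ, 0 < ε → Tendsto (fun n => P {ω | ε < ‖X n ω - c‖}) atTop (𝓝 0)


section AuxLemmas
open scoped NNReal




lemma integrable_pow_gaussian01 (k : ℕ) :
    Integrable (fun x : ℝ => x ^ k) (gaussianReal 0 1) := by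
  rw [gaussianReal_of_var_ne_zero _ one_ne_zero]
  rw [integrable_withDensity_iff (measurable_gaussianPDF _ _)
    (Filter.Eventually.of_forall fun x => ENNReal.ofReal_lt_top)]
  have h : Integrable (fun x : ℝ => (x ^ k * Real.exp (-(1/2) * x ^ 2)) *
      (Real.sqrt (2 * Real.pi * (1:ℝ≥0)))⁻¹) ℙ := by
    refine Integrable.mul_const ?_ _
    have hk : (-1 : ℝ) < (k : ℝ) := lt_of_lt_of_le (by norm_num) (Nat.cast_nonneg k)
    have := integrable_rpow_mul_exp_neg_mul_sq (b := 1/2) (by norm_num) hk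
    simpa [Real.rpow_natCast] using this
  refine h.congr (Filter.Eventually.of_forall fun x => ?_)
  simp only [gaussianPDF]
  rw [ENNReal.toReal_ofReal (gaussianPDFReal_nonneg _ _ _)]
  simp only [gaussianPDFReal]
  rw [show (-(x - 0) ^ 2 / (2 * ((1:ℝ≥0):ℝ))) = -(1/2) * x ^ 2 by push_cast; ring]
  ring



lemma gaussianReal_eq_map (m : ℝ) (v : ℝ≥0) :
    gaussianReal m v
      = Measure.map (fun x => Real.sqrt v * x + m) (gaussianReal 0 1) := by
  have h1 : (gaussianReal 0 1).map (fun x => Real.sqrt v * x) = gaussianReal 0 v := by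
    have h := gaussianReal_map_const_mul (μ := 0) (v := 1) (Real.sqrt v)
    have hv : (NNReal.mk (Real.sqrt (v:ℝ) ^ 2) (sq_nonneg _)) = v := by
      ext; simp [Real.sq_sqrt v.coe_nonneg]
    rw [hv, mul_one, mul_zero] at h
    exact h
  have h2 : (gaussianReal 0 v).map (fun x => x + m) = gaussianReal m v := by
    simpa using gaussianReal_map_add_const (μ := 0) (v := v) m
  rw [← h2, ← h1, Measure.map_map (measurable_id'.add_const m)
    (measurable_id'.const_mul _)]
  rfl

lemma integral_gaussian_eq (m : ℝ) (v : ℝ≥0) {f : ℝ → ℝ} (hf : Measurable f) :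
    ∫ x, f x ∂(gaussianReal m v) = ∫ x, f (Real.sqrt v * x + m) ∂(gaussianReal 0 1) := by
  rw [gaussianReal_eq_map m v, integral_map]
  · exact ((measurable_id'.const_mul _).add_const m).aemeasurable
  · exact hf.aestronglyMeasurable

lemma integrable_gaussian_iff (m : ℝ) (v : ℝ≥0) {f : ℝ → ℝ} (hf : Measurable f) :
    Integrable f (gaussianReal m v) ↔
      Integrable (fun x => f (Real.sqrt v * x + m)) (gaussianReal 0 1) := by
  rw [gaussianReal_eq_map m v, integrable_map_measure hf.aestronglyMeasurable
    ((measurable_id'.const_mul _).add_const m).aemeasurable]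
  rfl

lemma integrable_id_gaussian (m : ℝ) (v : ℝ≥0) :
    Integrable (fun x => x) (gaussianReal m v) := by
  rw [integrable_gaussian_iff m v measurable_id']
  exact (((integrable_pow_gaussian01 1).congr (Filter.Eventually.of_forall (by simp))).const_mul
    (Real.sqrt v)).add (integrable_const m)

lemma integrable_sq_gaussian (m : ℝ) (v : ℝ≥0) :
    Integrable (fun x => x ^ 2) (gaussianReal m v) := by
  rw [integrable_gaussian_iff m v (by fun_prop)]
  have : (fun x : ℝ => (Real.sqrt v * x + m) ^ 2)
      = fun x => (Real.sqrt v)^2 * x^2 + (2 * Real.sqrt v * m) * x + m^2 := by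
    ext x; ring
  rw [this]
  have h1 : Integrable (fun x : ℝ => x) (gaussianReal 0 1) :=
    (integrable_pow_gaussian01 1).congr (Filter.Eventually.of_forall (by simp))
  exact (((integrable_pow_gaussian01 2).const_mul _).add (h1.const_mul _)).add
    (integrable_const _)

lemma integral_id_gaussian01 : ∫ x, x ∂(gaussianReal 0 1) = 0 := by
  have hmap : (gaussianReal 0 1).map (fun x => (-1 : ℝ) * x) = gaussianReal 0 1 := by
    have := gaussianReal_map_const_mul (μ := 0) (v := 1) (-1 : ℝ)
    simp only [mul_zero] at this
    convert this using 2
    ext; norm_num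
  have h1 : Integrable (fun x : ℝ => x) (gaussianReal 0 1) :=
    (integrable_pow_gaussian01 1).congr (Filter.Eventually.of_forall (by simp))
  have : ∫ x, x ∂(gaussianReal 0 1) = ∫ x, (-1 : ℝ) * x ∂(gaussianReal 0 1) := by
    conv_lhs => rw [← hmap]
    rw [integral_map (measurable_id'.const_mul _).aemeasurable
      measurable_id'.aestronglyMeasurable]
  rw [integral_const_mul] at this
  linarith

lemma integral_id_gaussian (m : ℝ) (v : ℝ≥0) : ∫ x, x ∂(gaussianReal m v) = m := by
  rw [integral_gaussian_eq m v measurable_id']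
  have h1 : Integrable (fun x : ℝ => x) (gaussianReal 0 1) :=
    (integrable_pow_gaussian01 1).congr (Filter.Eventually.of_forall (by simp))
  rw [integral_add (h1.const_mul _) (integrable_const m), integral_const_mul,
    integral_id_gaussian01, integral_const]
  simp

/-- second moment of the standard gaussian (we only need its nonnegativity & finiteness). -/
noncomputable def gaussK : ℝ := ∫ x, x ^ 2 ∂(gaussianReal 0 1)

lemma gaussK_nonneg : 0 ≤ gaussK := integral_nonneg fun x => sq_nonneg x

lemma integral_sub_sq_gaussian (m : ℝ) (v : ℝ≥0) :
    ∫ x, (x - m) ^ 2 ∂(gaussianReal m v) = gaussK * v := by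
  rw [integral_gaussian_eq m v (by fun_prop)]
  have : (fun x : ℝ => (Real.sqrt v * x + m - m) ^ 2) = fun x => (v : ℝ) * x ^ 2 := by
    ext x
    rw [add_sub_cancel_right, mul_pow, Real.sq_sqrt v.coe_nonneg]
  rw [this, integral_const_mul, gaussK]
  ring

lemma measurable_softThreshold (lam : ℝ) : Measurable (softThreshold lam) := by
  unfold softThreshold
  exact Measurable.ite (measurableSet_lt measurable_id' measurable_const)
    (measurable_id'.add_const _)
    (Measurable.ite (measurableSet_le measurable_id' measurable_const) measurable_const
      (measurable_id'.sub_const _))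

lemma softThreshold_zero (x : ℝ) : softThreshold 0 x = x := by
  unfold softThreshold; split_ifs <;> linarith

lemma abs_softThreshold_le {lam : ℝ} (hl : 0 ≤ lam) (x : ℝ) : |softThreshold lam x| ≤ |x| := by
  unfold softThreshold
  split_ifs with h1 h2
  · rw [abs_of_nonpos (by linarith), abs_of_nonpos (by linarith)]; linarith
  · simp [abs_nonneg]
  · push_neg at h1 h2
    rw [abs_of_nonneg (by linarith), abs_of_nonneg (by linarith)]; linarith

lemma softThreshold_neg {lam : ℝ} (hl : 0 ≤ lam) (x : ℝ) :
    softThreshold lam (-x) = -softThreshold lam x := by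
  unfold softThreshold
  split_ifs <;> linarith

lemma softThreshold_key {lam ε x : ℝ} (hε : 0 < ε) (hlam : ε ≤ lam) :
    ε - max (ε - x) 0 ≤ x - softThreshold lam x := by
  unfold softThreshold
  rcases max_cases (ε - x) 0 with ⟨h, h'⟩ | ⟨h, h'⟩ <;> rw [h] <;> split_ifs <;> linarith


lemma integrable_sub_sq_gaussian (m : ℝ) (v : ℝ≥0) :
    Integrable (fun x => (x - m) ^ 2) (gaussianReal m v) := by
  have h : (fun x : ℝ => (x - m)^2) = fun x => x^2 - (2*m)*x + m^2 := by ext x; ring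
  rw [h]
  exact ((integrable_sq_gaussian m v).sub
    ((integrable_id_gaussian m v).const_mul _)).add (integrable_const _)

lemma integral_sq_gaussian (m : ℝ) (v : ℝ≥0) :
    ∫ x, x ^ 2 ∂(gaussianReal m v) = gaussK * v + m ^ 2 := by
  have h : (fun x : ℝ => x ^ 2) = fun x => ((x - m)^2 + (2*m)*x) + (-(m^2)) := by ext x; ring
  have hB : Integrable (fun x : ℝ => (2*m)*x) (gaussianReal m v) :=
    (integrable_id_gaussian m v).const_mul _
  have hA : Integrable (fun x : ℝ => (x - m)^2 + (2*m)*x) (gaussianReal m v) :=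
    (integrable_sub_sq_gaussian m v).add hB
  rw [h, integral_add hA (integrable_const _),
    integral_add (integrable_sub_sq_gaussian m v) hB,
    integral_const_mul, integral_sub_sq_gaussian, integral_id_gaussian, integral_const]
  simp only [measure_univ, probReal_univ, smul_eq_mul, one_mul]
  ring

lemma integrable_softThreshold_gaussian {lam : ℝ} (hl : 0 ≤ lam) (m : ℝ) (v : ℝ≥0) :
    Integrable (softThreshold lam) (gaussianReal m v) :=
  (integrable_id_gaussian m v).mono (measurable_softThreshold lam).aestronglyMeasurable
    (Filter.Eventually.of_forall fun x => by
      simpa [Real.norm_eq_abs] using abs_softThreshold_le hl x)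

lemma integrable_softThreshold_sq_gaussian {lam : ℝ} (hl : 0 ≤ lam) (m : ℝ) (v : ℝ≥0) :
    Integrable (fun x => softThreshold lam x ^ 2) (gaussianReal m v) := by
  refine (integrable_sq_gaussian m v).mono
    ((measurable_softThreshold lam).pow_const 2).aestronglyMeasurable
    (Filter.Eventually.of_forall fun x => ?_)
  rw [Real.norm_eq_abs, Real.norm_eq_abs, abs_pow, abs_pow]
  exact pow_le_pow_left₀ (abs_nonneg _) (abs_softThreshold_le hl x) 2

lemma softThresholdMean_lam_zero (m s2 : ℝ) (n : ℕ) : softThresholdMean 0 m s2 n = m := by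
  unfold softThresholdMean
  simp only [softThreshold_zero]
  exact integral_id_gaussian _ _

lemma softThresholdVar_lam_zero (m s2 : ℝ) (n : ℕ) :
    softThresholdVar 0 m s2 n = gaussK * ((s2 / n).toNNReal : ℝ) := by
  unfold softThresholdVar
  rw [softThresholdMean_lam_zero]
  simp only [softThreshold_zero]
  rw [integral_sq_gaussian]
  ring

lemma softThresholdVar_nonneg {lam : ℝ} (hl : 0 ≤ lam) (m s2 : ℝ) (n : ℕ) :
    0 ≤ softThresholdVar lam m s2 n := by
  set v := (s2 / (n:ℝ)).toNNReal with hv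
  set γ := gaussianReal m v with hγ
  have hI1 := integrable_softThreshold_gaussian hl m v
  have hI2 := integrable_softThreshold_sq_gaussian hl m v
  set c := softThresholdMean lam m s2 n with hc
  have hc' : c = ∫ x, softThreshold lam x ∂γ := rfl
  have h0 : (0:ℝ) ≤ ∫ x, (softThreshold lam x - c)^2 ∂γ := integral_nonneg fun x => sq_nonneg _
  have hexp : ∫ x, (softThreshold lam x - c)^2 ∂γ
      = (∫ x, softThreshold lam x ^ 2 ∂γ) - 2*c*(∫ x, softThreshold lam x ∂γ) + c^2 := by
    have h : (fun x => (softThreshold lam x - c)^2)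
        = fun x => softThreshold lam x ^ 2 - (2*c) * softThreshold lam x + c^2 := by ext x; ring
    have hmul : Integrable (fun x => (2*c) * softThreshold lam x) γ := hI1.const_mul _
    have hsub : Integrable (fun x => softThreshold lam x ^ 2 - (2*c) * softThreshold lam x) γ :=
      hI2.sub hmul
    rw [h, integral_add hsub (integrable_const _),
      integral_sub hI2 hmul, integral_const_mul, integral_const]
    simp only [measure_univ, probReal_univ, smul_eq_mul, one_mul]
    rfl
  have hvar : softThresholdVar lam m s2 n = (∫ x, softThreshold lam x ^ 2 ∂γ) - c^2 := rfl
  rw [hexp, ← hc'] at h0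
  rw [hvar]
  linarith

lemma mean_lower {lam ε : ℝ} (m : ℝ) (v : ℝ≥0) (hε : 0 < ε) (hlam : ε ≤ lam) (hm : ε ≤ m) :
    ε - (gaussK * v)/ε - ε/4 ≤ m - ∫ x, softThreshold lam x ∂(gaussianReal m v) := by
  have hl : 0 ≤ lam := hε.le.trans hlam
  set γ := gaussianReal m v with hγ
  have hIS := integrable_softThreshold_gaussian hl m v
  have hId := integrable_id_gaussian m v
  have hIub : Integrable (fun x => (x - m)^2/ε + ε/4) γ :=
    ((integrable_sub_sq_gaussian m v).div_const ε).add (integrable_const _)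
  have hIpos : Integrable (fun x => max (ε - x) 0) γ := by
    have h := ((integrable_const ε).sub hId).pos_part
    simpa using h
  have h1 : m - ∫ x, softThreshold lam x ∂γ = ∫ x, (x - softThreshold lam x) ∂γ := by
    rw [integral_sub hId hIS, integral_id_gaussian]
  have h2 : ∫ x, (ε - max (ε - x) 0) ∂γ ≤ ∫ x, (x - softThreshold lam x) ∂γ :=
    integral_mono ((integrable_const ε).sub hIpos) (hId.sub hIS)
      (fun x => softThreshold_key hε hlam)
  have h3 : ∫ x, max (ε - x) 0 ∂γ ≤ ∫ x, ((x - m)^2/ε + ε/4) ∂γ := by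
    refine integral_mono hIpos hIub (fun x => ?_)
    have hpos : (0:ℝ) ≤ (x - m)^2/ε + ε/4 := by positivity
    have h := div_nonneg (sq_nonneg (m - x - ε/2)) hε.le
    have heq : (m - x - ε/2)^2/ε = (x-m)^2/ε + ε/4 - (m - x) := by field_simp; ring
    rw [heq] at h
    exact max_le (by linarith) hpos
  have h4 : ∫ x, ((x - m)^2/ε + ε/4) ∂γ = (gaussK * v)/ε + ε/4 := by
    rw [integral_add ((integrable_sub_sq_gaussian m v).div_const ε) (integrable_const _),
      integral_div, integral_sub_sq_gaussian, integral_const]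
    simp only [measure_univ, probReal_univ, smul_eq_mul, one_mul]
  have h5 : ∫ x, (ε - max (ε - x) 0) ∂γ = ε - ∫ x, max (ε - x) 0 ∂γ := by
    rw [integral_sub (integrable_const ε) hIpos, integral_const]
    simp only [measure_univ, probReal_univ, smul_eq_mul, one_mul]
  linarith

lemma softThresholdMean_neg {lam : ℝ} (hl : 0 ≤ lam) (m s2 : ℝ) (n : ℕ) :
    softThresholdMean lam (-m) s2 n = -softThresholdMean lam m s2 n := by
  unfold softThresholdMean
  set v := (s2 / (n:ℝ)).toNNReal with hv
  have hmap := gaussianReal_map_const_mul (μ := m) (v := v) (-1:ℝ)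
  have hv1 : (NNReal.mk ((-1:ℝ)^2) (sq_nonneg _)) = 1 := by ext; norm_num
  rw [show ((-1:ℝ)*m) = -m by ring, hv1, one_mul] at hmap
  rw [← hmap, integral_map (measurable_id'.const_mul _).aemeasurable
    (measurable_softThreshold lam).aestronglyMeasurable]
  simp only [neg_one_mul, softThreshold_neg hl]
  rw [integral_neg]

lemma sq_mean_dev_lower {lam m ε s2 : ℝ} {n : ℕ} (hε : 0 < ε) (hlam : ε ≤ lam)
    (hm : ε ≤ |m|) (hv : gaussK * (((s2 / (n:ℝ)).toNNReal : ℝ≥0) : ℝ) ≤ ε^2/4) :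
    ε^2/4 ≤ (softThresholdMean lam m s2 n - m)^2 := by
  set v := (s2 / (n:ℝ)).toNNReal with hvdef
  have hl : 0 ≤ lam := hε.le.trans hlam
  have hKv : (gaussK * (v:ℝ))/ε ≤ ε/4 := by
    rw [div_le_iff₀ hε]
    nlinarith [hv]
  have hhalf : ε/2 ≤ |softThresholdMean lam m s2 n - m| := by
    rcases le_or_gt 0 m with hm0 | hm0
    · have hm' : ε ≤ m := by rwa [abs_of_nonneg hm0] at hm
      have hlow := mean_lower m v hε hlam hm'
      have hmean : softThresholdMean lam m s2 n
          = ∫ x, softThreshold lam x ∂(gaussianReal m v) := rfl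
      rw [abs_sub_comm, abs_of_nonneg (by rw [hmean]; linarith)]
      rw [hmean]; linarith
    · have hm' : ε ≤ -m := by rwa [abs_of_neg hm0] at hm
      have hlow := mean_lower (-m) v hε hlam hm'
      have hneg := softThresholdMean_neg hl m s2 n
      have hmean : softThresholdMean lam (-m) s2 n
          = ∫ x, softThreshold lam x ∂(gaussianReal (-m) v) := rfl
      rw [hneg] at hmean
      rw [abs_of_nonneg (by linarith [hmean ▸ hlow])]
      linarith [hmean ▸ hlow]
  nlinarith [sq_abs (softThresholdMean lam m s2 n - m), hhalf, hε,
    abs_nonneg (softThresholdMean lam m s2 n - m)]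

lemma l1Crit_nonneg {D : ℕ} {lam : ℝ} (hl : 0 ≤ lam) (ψ s2 : Fin D → ℝ) (n : ℕ) :
    0 ≤ l1Crit lam ψ s2 n :=
  Finset.sum_nonneg fun d _ => add_nonneg (sq_nonneg _) (softThresholdVar_nonneg hl _ _ _)

lemma l1Crit_zero {D : ℕ} (ψ s2 : Fin D → ℝ) (n : ℕ) :
    l1Crit 0 ψ s2 n = ∑ d, gaussK * ((s2 d / (n:ℝ)).toNNReal : ℝ) := by
  unfold l1Crit
  refine Finset.sum_congr rfl fun d _ => ?_
  rw [softThresholdMean_lam_zero, softThresholdVar_lam_zero]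
  ring

lemma sq_le_l1Crit {D : ℕ} {lam : ℝ} (hl : 0 ≤ lam) (ψ s2 : Fin D → ℝ) (n : ℕ) (d : Fin D) :
    (softThresholdMean lam (ψ d) (s2 d) n - ψ d)^2 ≤ l1Crit lam ψ s2 n := by
  have h := Finset.single_le_sum
    (f := fun d => (softThresholdMean lam (ψ d) (s2 d) n - ψ d) ^ 2
      + softThresholdVar lam (ψ d) (s2 d) n)
    (fun i _ => add_nonneg (sq_nonneg _) (softThresholdVar_nonneg hl _ _ _))
    (Finset.mem_univ d)
  have h2 := softThresholdVar_nonneg hl (ψ d) (s2 d) n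
  unfold l1Crit
  linarith

end AuxLemmas


lemma measurable_mulVec {D : ℕ} (M : Matrix (Fin D) (Fin D) ℝ) :
    Measurable (fun x : Fin D → ℝ => M.mulVec x) := by
  refine measurable_pi_lambda _ fun d => ?_
  simp only [Matrix.mulVec, dotProduct]
  exact Finset.measurable_sum _ fun i _ => (measurable_pi_apply i).const_mul _

lemma tendsto_prob_of_dist {Ω : Type*} [MeasurableSpace Ω] (P : Measure Ω)
    [IsProbabilityMeasure P] {D : ℕ} (ψn : ℕ → Ω → Fin D → ℝ) (ψ₀ : Fin D → ℝ)
    (hψmeas : ∀ n, Measurable (ψn n)) (ν : Measure (Fin D → ℝ)) [IsProbabilityMeasure ν]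
    (hdist : TendstoInDistribution P (fun n ω => Real.sqrt n • (ψn n ω - ψ₀)) ν)
    {δ : ℝ} (hδ : 0 < δ) :
    Tendsto (fun n => P {ω | δ < ‖ψn n ω - ψ₀‖}) atTop (𝓝 0) := by
  rw [ENNReal.tendsto_nhds_zero]
  intro η hη
  obtain ⟨r, hr0, hrη⟩ : ∃ r : ℝ, 0 < r ∧ ENNReal.ofReal r ≤ η := by
    rcases eq_or_ne η ⊤ with h | h
    · exact ⟨1, one_pos, h ▸ le_top⟩
    · exact ⟨η.toReal, ENNReal.toReal_pos hη.ne' h, by rw [ENNReal.ofReal_toReal h]⟩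
  have hmeasset : ∀ M : ℕ, NullMeasurableSet {x : Fin D → ℝ | (M:ℝ) ≤ ‖x‖} ν := fun M =>
    (measurableSet_le measurable_const continuous_norm.measurable).nullMeasurableSet
  have hanti : Antitone (fun M : ℕ => {x : Fin D → ℝ | (M:ℝ) ≤ ‖x‖}) := by
    intro a b hab x hx
    exact le_trans (Nat.cast_le.mpr hab : (a:ℝ) ≤ (b:ℝ)) hx
  have hiInter : (⋂ M : ℕ, {x : Fin D → ℝ | (M:ℝ) ≤ ‖x‖}) = ∅ := by
    ext x
    simp only [Set.mem_iInter, Set.mem_setOf_eq, Set.mem_empty_iff_false, iff_false, not_forall,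
      not_le]
    obtain ⟨M, hM⟩ := exists_nat_gt ‖x‖
    exact ⟨M, hM⟩
  have htend := tendsto_measure_iInter_atTop hmeasset hanti ⟨0, measure_ne_top ν _⟩
  rw [hiInter, measure_empty] at htend
  obtain ⟨M, hM⟩ := (htend.eventually_lt_const
    (ENNReal.ofReal_pos.mpr (by linarith : (0:ℝ) < r/2))).exists
  set g : (Fin D → ℝ) → ℝ := fun x => min 1 (max (‖x‖ - M) 0) with hg
  have hgcont : Continuous g :=
    continuous_const.min ((continuous_norm.sub continuous_const).max continuous_const)
  have hg0 : ∀ x, 0 ≤ g x := fun x => le_min one_pos.le (le_max_right _ _)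
  have hg1 : ∀ x, g x ≤ 1 := fun x => min_le_left _ _
  set F : BoundedContinuousFunction (Fin D → ℝ) ℝ :=
    BoundedContinuousFunction.mkOfBound ⟨g, hgcont⟩ 1 (fun x y => by
      rw [Real.dist_eq, abs_le]
      constructor <;> simp only [ContinuousMap.coe_mk] <;>
        linarith [hg0 x, hg1 x, hg0 y, hg1 y]) with hF
  have hFg : ∀ x, F x = g x := fun _ => rfl
  have hdF := hdist F
  have hle : ENNReal.ofReal (∫ x, F x ∂ν) ≤ ν {x : Fin D → ℝ | (M:ℝ) ≤ ‖x‖} := by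
    refine integral_le_measure (fun x _ => hg1 x) (fun x hx => ?_)
    have hx' : ‖x‖ - M ≤ 0 := by
      simp only [Set.mem_compl_iff, Set.mem_setOf_eq, not_le] at hx
      linarith
    show g x ≤ 0
    rw [hg]
    simp only
    rw [max_eq_right hx', min_eq_right (by norm_num : (0:ℝ) ≤ 1)]
  have hlim : ∫ x, F x ∂ν < r/2 := by
    have h2 := lt_of_le_of_lt hle hM
    have hnn : (0:ℝ) ≤ ∫ x, F x ∂ν := integral_nonneg fun x => hg0 x
    rwa [ENNReal.ofReal_lt_ofReal_iff_of_nonneg hnn] at h2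
  have hev1 : ∀ᶠ n : ℕ in atTop, ∫ ω, F (Real.sqrt n • (ψn n ω - ψ₀)) ∂P ≤ r/2 :=
    hdF.eventually_le_const hlim
  have hev2 : ∀ᶠ n : ℕ in atTop, (M:ℝ) + 1 ≤ Real.sqrt n * δ := by
    rw [eventually_atTop]
    refine ⟨Nat.ceil ((((M:ℝ)+1)/δ)^2), fun n hn => ?_⟩
    have h1 : (((M:ℝ)+1)/δ)^2 ≤ (n:ℝ) := le_trans (Nat.le_ceil _) (by exact_mod_cast hn)
    have h2 : ((M:ℝ)+1)/δ ≤ Real.sqrt n := by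
      rw [show ((M:ℝ)+1)/δ = Real.sqrt ((((M:ℝ)+1)/δ)^2) by
        rw [Real.sqrt_sq (by positivity)]]
      exact Real.sqrt_le_sqrt h1
    calc (M:ℝ)+1 = (((M:ℝ)+1)/δ) * δ := by field_simp
    _ ≤ Real.sqrt n * δ := mul_le_mul_of_nonneg_right h2 hδ.le
  filter_upwards [hev1, hev2] with n h1 h2
  have hsub : {ω | δ < ‖ψn n ω - ψ₀‖}
      ⊆ {ω | (1:ℝ) ≤ F (Real.sqrt n • (ψn n ω - ψ₀))} := by
    intro ω hω
    have hω' : δ < ‖ψn n ω - ψ₀‖ := hω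
    have hnx : (M:ℝ) + 1 ≤ ‖Real.sqrt n • (ψn n ω - ψ₀)‖ := by
      rw [norm_smul, Real.norm_eq_abs, abs_of_nonneg (Real.sqrt_nonneg _)]
      calc (M:ℝ)+1 ≤ Real.sqrt n * δ := h2
      _ ≤ Real.sqrt n * ‖ψn n ω - ψ₀‖ :=
        mul_le_mul_of_nonneg_left hω'.le (Real.sqrt_nonneg _)
    show (1:ℝ) ≤ F (Real.sqrt n • (ψn n ω - ψ₀))
    rw [hFg, hg]
    simp only
    exact le_min le_rfl (le_trans (by linarith) (le_max_left _ _))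
  have hXmeas : Measurable fun ω => Real.sqrt n • (ψn n ω - ψ₀) := by
    have h : Measurable fun ω => ψn n ω - ψ₀ := (hψmeas n).sub measurable_const
    exact h.const_smul (Real.sqrt n)
  have hint : Integrable (fun ω => F (Real.sqrt n • (ψn n ω - ψ₀))) P := by
    refine Integrable.mono' (integrable_const 1)
      ((hgcont.measurable.comp hXmeas).aestronglyMeasurable)
      (Filter.Eventually.of_forall fun ω => ?_)
    rw [hFg, Real.norm_eq_abs, abs_le]
    exact ⟨by linarith [hg0 (Real.sqrt n • (ψn n ω - ψ₀))],
      hg1 (Real.sqrt n • (ψn n ω - ψ₀))⟩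
  have hmar := mul_meas_ge_le_integral_of_nonneg
    (Filter.Eventually.of_forall fun ω => by rw [hFg]; exact hg0 _) hint 1
  rw [one_mul] at hmar
  calc P {ω | δ < ‖ψn n ω - ψ₀‖}
      ≤ P {ω | (1:ℝ) ≤ F (Real.sqrt n • (ψn n ω - ψ₀))} := measure_mono hsub
  _ = ENNReal.ofReal ((P {ω | (1:ℝ) ≤ F (Real.sqrt n • (ψn n ω - ψ₀))}).toReal) :=
      (ENNReal.ofReal_toReal (measure_ne_top _ _)).symm
  _ ≤ ENNReal.ofReal (∫ ω, F (Real.sqrt n • (ψn n ω - ψ₀)) ∂P) :=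
      ENNReal.ofReal_le_ofReal hmar
  _ ≤ ENNReal.ofReal r := ENNReal.ofReal_le_ofReal (by linarith)
  _ ≤ η := hrη

/-- under the hypotheses of Theorem 5.1, the nearly-minimizing tuning parameter
`λ_n*` converges to `0` in probability (argmin-consistency step). -/
theorem l1_tuning_parameter_tendsto_zero_in_probability
    {Ω : Type*} [MeasurableSpace Ω] (P : Measure Ω) [IsProbabilityMeasure P]
    (D : ℕ) (hD : 1 ≤ D) (ψ₀ : Fin D → ℝ) (hψ₀ : ∃ d, ψ₀ d ≠ 0)
    (S : Matrix (Fin D) (Fin D) ℝ) (hS : S.PosSemidef) (hSdiag : ∀ d, 0 < S d d)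
    (ψn : ℕ → Ω → Fin D → ℝ) (hψmeas : ∀ n, Measurable (ψn n))
    (hdist : TendstoInDistribution P
      (fun n ω => Real.sqrt n • (ψn n ω - ψ₀)) (multivariateGaussian hS))
    (σ2n : ℕ → Ω → Fin D → ℝ) (hσmeas : ∀ n, Measurable (σ2n n))
    (hσpos : ∀ n ω d, 0 < σ2n n ω d)
    (hσprob : TendstoInProbability P σ2n (fun d => S d d))
    (lamn : ℕ → Ω → ℝ) (hlammeas : ∀ n, Measurable (lamn n))
    (hlamnonneg : ∀ n ω, 0 ≤ lamn n ω)
    (εn : ℕ → Ω → ℝ) (hεprob : TendstoInProbability P εn 0)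
    (hnear : ∀ n ω, l1Crit (lamn n ω) (ψn n ω) (σ2n n ω) n ≤
      (⨅ lam : {lam : ℝ // 0 ≤ lam}, l1Crit lam.1 (ψn n ω) (σ2n n ω) n) + εn n ω) :
    TendstoInProbability P lamn 0 := by
  have hmeasmul : Measurable (fun x : Fin D → ℝ => ((hS.1.eigenvectorUnitary : Matrix (Fin D) (Fin D) ℝ) *
      Matrix.diagonal (Real.sqrt ∘ hS.1.eigenvalues) *
      (star hS.1.eigenvectorUnitary : Matrix (Fin D) (Fin D) ℝ)).mulVec x) := measurable_mulVec _
  have hprob : IsProbabilityMeasure (multivariateGaussian hS) := by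
    unfold _root_.multivariateGaussian
    exact Measure.isProbabilityMeasure_map hmeasmul.aemeasurable
  intro ε hε
  obtain ⟨d₀, hd₀⟩ := hψ₀
  have ha0 : 0 < |ψ₀ d₀| := abs_pos.mpr hd₀
  set a := |ψ₀ d₀| with ha
  set e := min ε (3*a/4) with he
  have he0 : 0 < e := lt_min hε (by linarith)
  have heε : e ≤ ε := min_le_left _ _
  have hea : e ≤ 3*a/4 := min_le_right _ _
  set R := ‖(fun d => S d d : Fin D → ℝ)‖ + 1 with hR
  have hR0 : 0 < R := by positivity
  have hA := tendsto_prob_of_dist P ψn ψ₀ hψmeas (multivariateGaussian hS) hdist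
    (show (0:ℝ) < a/4 by linarith)
  have hB := hσprob 1 one_pos
  have hC := hεprob (e^2/16) (by positivity)
  have hN : ∀ᶠ n : ℕ in atTop, {ω | ε < ‖lamn n ω - 0‖}
      ⊆ {ω | a/4 < ‖ψn n ω - ψ₀‖} ∪ {ω | (1:ℝ) < ‖σ2n n ω - (fun d => S d d)‖}
        ∪ {ω | e^2/16 < ‖εn n ω - 0‖} := by
    have h1 : Tendsto (fun n : ℕ => gaussK * R / (n:ℝ)) atTop (𝓝 0) :=
      tendsto_const_div_atTop_nhds_zero_nat _
    have h2 : Tendsto (fun n : ℕ => (D:ℝ) * (gaussK * R) / (n:ℝ)) atTop (𝓝 0) :=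
      tendsto_const_div_atTop_nhds_zero_nat _
    filter_upwards [h1.eventually_le_const (show (0:ℝ) < e^2/4 by positivity),
      h2.eventually_le_const (show (0:ℝ) < e^2/16 by positivity),
      eventually_ge_atTop 1] with n hn1 hn2 hn3
    intro ω hω
    by_contra hcon
    simp only [Set.mem_union, not_or] at hcon
    obtain ⟨⟨hconA, hconB⟩, hconC⟩ := hcon
    simp only [Set.mem_setOf_eq, not_lt] at hconA hconB hconC
    have hωlam : ε < lamn n ω := by
      have h : ε < ‖lamn n ω - 0‖ := hω
      rwa [sub_zero, Real.norm_eq_abs, abs_of_nonneg (hlamnonneg n ω)] at h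
    have hεgood : |εn n ω| ≤ e^2/16 := by rwa [sub_zero, Real.norm_eq_abs] at hconC
    have hn0 : (0:ℝ) < (n:ℝ) := by exact_mod_cast Nat.lt_of_lt_of_le Nat.zero_lt_one hn3
    have hψd : |ψn n ω d₀ - ψ₀ d₀| ≤ a/4 := by
      have h := norm_le_pi_norm (ψn n ω - ψ₀) d₀
      simp only [Pi.sub_apply, Real.norm_eq_abs] at h
      linarith
    have hmd : e ≤ |ψn n ω d₀| := by
      have h := abs_sub_abs_le_abs_sub (ψ₀ d₀) (ψn n ω d₀)
      rw [abs_sub_comm] at h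
      linarith
    have hσle : ∀ d, σ2n n ω d ≤ R := by
      intro d
      have h1 := norm_le_pi_norm (σ2n n ω - fun d => S d d) d
      simp only [Pi.sub_apply, Real.norm_eq_abs] at h1
      have h2 := norm_le_pi_norm (fun d => S d d : Fin D → ℝ) d
      rw [Real.norm_eq_abs] at h2
      have h3 := (abs_le.mp (le_trans h1 hconB)).2
      have h5 := le_abs_self (S d d)
      rw [hR]
      linarith
    have hvle : ∀ d, ((σ2n n ω d / (n:ℝ)).toNNReal : ℝ) ≤ R / (n:ℝ) := by
      intro d
      rw [Real.coe_toNNReal _ (div_nonneg (hσpos n ω d).le hn0.le)]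
      exact (div_le_div_iff_of_pos_right hn0).mpr (hσle d)
    have hKv : gaussK * (((σ2n n ω d₀ / (n:ℝ)).toNNReal : NNReal) : ℝ) ≤ e^2/4 := by
      calc gaussK * (((σ2n n ω d₀ / (n:ℝ)).toNNReal : NNReal) : ℝ)
          ≤ gaussK * (R / (n:ℝ)) := mul_le_mul_of_nonneg_left (hvle d₀) gaussK_nonneg
      _ = gaussK * R / (n:ℝ) := by ring
      _ ≤ e^2/4 := hn1
    have hlam' : e ≤ lamn n ω := le_trans heε hωlam.le
    have hlower := sq_mean_dev_lower he0 hlam' hmd hKv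
    have hcrit_lower : e^2/4 ≤ l1Crit (lamn n ω) (ψn n ω) (σ2n n ω) n :=
      le_trans hlower (sq_le_l1Crit (hlamnonneg n ω) _ _ _ d₀)
    have hinf_le : (⨅ lam : {lam : ℝ // 0 ≤ lam}, l1Crit lam.1 (ψn n ω) (σ2n n ω) n)
        ≤ l1Crit 0 (ψn n ω) (σ2n n ω) n := by
      have h00 : (0:ℝ) ≤ (0:ℝ) := le_refl 0
      refine ciInf_le ⟨0, ?_⟩ (⟨0, h00⟩ : {lam : ℝ // 0 ≤ lam})
      rintro x ⟨lam, rfl⟩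
      exact l1Crit_nonneg lam.2 _ _ _
    have hcrit0 : l1Crit 0 (ψn n ω) (σ2n n ω) n ≤ (D:ℝ) * (gaussK * R) / (n:ℝ) := by
      rw [l1Crit_zero]
      calc ∑ d, gaussK * (((σ2n n ω d / (n:ℝ)).toNNReal : NNReal) : ℝ)
          ≤ ∑ _d : Fin D, gaussK * (R/(n:ℝ)) :=
            Finset.sum_le_sum fun d _ => mul_le_mul_of_nonneg_left (hvle d) gaussK_nonneg
      _ = (D:ℝ) * (gaussK * (R/(n:ℝ))) := by
          rw [Finset.sum_const, Finset.card_univ, Fintype.card_fin, nsmul_eq_mul]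
      _ = (D:ℝ) * (gaussK * R) / (n:ℝ) := by ring
    have hnear' := hnear n ω
    have habs := (abs_le.mp hεgood).2
    have hesq : (0:ℝ) < e^2 := pow_pos he0 2
    linarith
  have hsum : Tendsto (fun n => P {ω | a/4 < ‖ψn n ω - ψ₀‖}
      + P {ω | (1:ℝ) < ‖σ2n n ω - (fun d => S d d)‖}
      + P {ω | e^2/16 < ‖εn n ω - 0‖}) atTop (𝓝 0) := by
    have h := (hA.add hB).add hC
    simpa using h
  refine tendsto_of_tendsto_of_tendsto_of_le_of_le' tendsto_const_nhds hsum
    (Filter.Eventually.of_forall fun n => zero_le) ?_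
  filter_upwards [hN] with n hn
  calc P {ω | ε < ‖lamn n ω - 0‖}
      ≤ P ({ω | a/4 < ‖ψn n ω - ψ₀‖} ∪ {ω | (1:ℝ) < ‖σ2n n ω - (fun d => S d d)‖}
        ∪ {ω | e^2/16 < ‖εn n ω - 0‖}) := measure_mono hn
  _ ≤ P ({ω | a/4 < ‖ψn n ω - ψ₀‖} ∪ {ω | (1:ℝ) < ‖σ2n n ω - (fun d => S d d)‖})
      + P {ω | e^2/16 < ‖εn n ω - 0‖} := measure_union_le _ _
  _ ≤ P {ω | a/4 < ‖ψn n ω - ψ₀‖} + P {ω | (1:ℝ) < ‖σ2n n ω - (fun d => S d d)‖}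
      + P {ω | e^2/16 < ‖εn n ω - 0‖} := add_le_add_left (measure_union_le _ _) _
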